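/- arXiv:2504.21204 — 3 statements merged into one kernel-verified Lean document; each statement's English description precedes it below -/
import Mathlib

section
/- Let q be odd, k ≥ 2, and l odd with gcd(2^{k+1}q, l) = 1. The small subgroup 𝔻 of U(2) generated by ψ = diag(ζ_{2q}, ζ_{2q}^{-1}) and τφ, where τ = [[0,i],[i,0]] and φ = diag(ζ_{4m}, ζ_{4m}) with m = 2^{k-1}l, is isomorphic to the direct product D_{2^{k+1}q} × C_l, where D_{2^{k+1}q} = ⟨x,y | x^{2^{k+1}} = 1, y^q = 1, xyx⁻¹ = y⁻¹⟩ and C_l is cyclic of order l. -/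
noncomputable section

open Matrix

/-- ζ_n = e^{2πi/n}. -/
def zeta (n : ℕ) : ℂ := Complex.exp (2 * Real.pi * Complex.I / n)

/-- Relators of D_{2^{k+1}q} = ⟨x,y | x^{2^{k+1}} = 1, y^q = 1, xyx⁻¹ = y⁻¹⟩,
with x = of 0, y = of 1. -/
def dihRels (k q : ℕ) : Set (FreeGroup (Fin 2)) :=
  {FreeGroup.of 0 ^ 2 ^ (k + 1), FreeGroup.of 1 ^ q,
   FreeGroup.of 0 * FreeGroup.of 1 * (FreeGroup.of 0)⁻¹ * FreeGroup.of 1}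

/-! ### Auxiliary lemmas about `zeta` -/

lemma zeta_ne_zero (n : ℕ) : zeta n ≠ 0 := Complex.exp_ne_zero _

lemma zeta_pow (n j : ℕ) : zeta n ^ j = Complex.exp ((j : ℂ) * (2 * Real.pi * Complex.I / n)) := by
  rw [zeta, ← Complex.exp_nat_mul]

lemma zeta_pow_eq_one_iff {n : ℕ} (hn : 0 < n) (j : ℕ) : zeta n ^ j = 1 ↔ n ∣ j := by
  rw [zeta_pow, Complex.exp_eq_one_iff]
  have hn' : (n : ℂ) ≠ 0 := Nat.cast_ne_zero.2 hn.ne'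
  have h2 : (2 * (Real.pi : ℂ) * Complex.I) ≠ 0 := by
    simp [Real.pi_ne_zero, Complex.I_ne_zero]
  constructor
  · rintro ⟨t, ht⟩
    have hc : (j : ℂ) * (2 * (Real.pi : ℂ) * Complex.I)
        = (t * n : ℂ) * (2 * (Real.pi : ℂ) * Complex.I) := by
      field_simp at ht
      linear_combination (2 * (Real.pi : ℂ) * Complex.I) * ht
    have hjc : (j : ℂ) = ((t * n : ℤ) : ℂ) := by
      have := mul_right_cancel₀ h2 hc
      push_cast
      exact this
    have hj : (j : ℤ) = t * n := by exact_mod_cast hjc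
    have ht0 : 0 ≤ t := by nlinarith [hj, Int.natCast_nonneg j, Int.natCast_pos.2 hn]
    lift t to ℕ using ht0 with s
    have : j = s * n := by exact_mod_cast hj
    exact ⟨s, this.trans (mul_comm s n)⟩
  · rintro ⟨t, rfl⟩
    exact ⟨t, by field_simp; push_cast; ring⟩

lemma zeta_pow_self {n : ℕ} (hn : 0 < n) : zeta n ^ n = 1 :=
  (zeta_pow_eq_one_iff hn n).2 dvd_rfl

lemma zeta_pow_half {n : ℕ} (hn : 0 < n) : zeta (2 * n) ^ n = -1 := by
  rw [zeta_pow]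
  have hn' : (n : ℂ) ≠ 0 := Nat.cast_ne_zero.2 hn.ne'
  have h : ((n:ℂ) * (2 * (Real.pi:ℂ) * Complex.I / ((2*n : ℕ) : ℂ))) = Real.pi * Complex.I := by
    push_cast; field_simp
  rw [h, Complex.exp_pi_mul_I]

lemma zeta_pow_quarter {n : ℕ} (hn : 0 < n) : zeta (4 * n) ^ n = Complex.I := by
  rw [zeta_pow]
  have hn' : (n : ℂ) ≠ 0 := Nat.cast_ne_zero.2 hn.ne'
  have h : ((n:ℂ) * (2 * (Real.pi:ℂ) * Complex.I / ((4*n : ℕ) : ℂ)))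
      = (Real.pi / 2 : ℂ) * Complex.I := by
    push_cast; field_simp; ring
  rw [h, Complex.exp_mul_I]
  have hc : Complex.cos (Real.pi / 2 : ℂ) = 0 := by
    rw [show ((Real.pi :ℂ)/ 2) = ((Real.pi / 2 : ℝ) : ℂ) by push_cast; ring, ← Complex.ofReal_cos,
      Real.cos_pi_div_two]; simp
  have hs : Complex.sin (Real.pi / 2 : ℂ) = 1 := by
    rw [show ((Real.pi :ℂ)/ 2) = ((Real.pi / 2 : ℝ) : ℂ) by push_cast; ring, ← Complex.ofReal_sin,
      Real.sin_pi_div_two]; simp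
  rw [hc, hs]; ring

/-! ### Auxiliary lemmas about 2×2 matrices and `GL (Fin 2) ℂ` -/

lemma diag_mul (x y z w : ℂ) : !![x,0;0,y] * !![z,0;0,w] = !![x*z, 0; 0, y*w] := by
  rw [Matrix.mul_fin_two]; ring_nf

lemma scalar_comm (z : ℂ) (M : Matrix (Fin 2) (Fin 2) ℂ) :
    !![z,0;0,z] * M = M * !![z,0;0,z] := by
  ext i j
  fin_cases i <;> fin_cases j <;>
    simp [Matrix.mul_apply, Fin.sum_univ_two, mul_comm]

lemma gl_diag_pow {ω : ℂ} (hω : ω ≠ 0) (ψ : GL (Fin 2) ℂ)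
    (hψ : (ψ : Matrix (Fin 2) (Fin 2) ℂ) = !![ω,0;0,ω⁻¹]) (n : ℕ) :
    ((ψ^n : GL (Fin 2) ℂ) : Matrix (Fin 2) (Fin 2) ℂ) = !![ω^n, 0; 0, (ω^n)⁻¹] := by
  induction n with
  | zero => simp [Matrix.one_fin_two]
  | succ n ih =>
    rw [pow_succ, Units.val_mul, ih, hψ, diag_mul, pow_succ, mul_inv]

lemma gl_anti_pow (c : ℂ) (a : GL (Fin 2) ℂ)
    (ha : (a : Matrix (Fin 2) (Fin 2) ℂ) = !![0,c;c,0]) (n : ℕ) :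
    ((a^n : GL (Fin 2) ℂ) : Matrix (Fin 2) (Fin 2) ℂ)
      = if Even n then !![c^n, 0; 0, c^n] else !![0, c^n; c^n, 0] := by
  induction n with
  | zero => simp [Matrix.one_fin_two]
  | succ n ih =>
    rw [pow_succ, Units.val_mul, ih, ha]
    rcases Nat.even_or_odd n with h | h
    · have h1 : ¬ Even (n + 1) := by simp [Nat.even_add_one, h]
      rw [if_pos h, if_neg h1, Matrix.mul_fin_two]
      ext i j
      fin_cases i <;> fin_cases j <;> simp [pow_succ]
    · have h0 : ¬ Even n := Nat.not_even_iff_odd.2 h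
      have h1 : Even (n + 1) := Nat.even_add_one.2 h0
      rw [if_neg h0, if_pos h1, Matrix.mul_fin_two]
      ext i j
      fin_cases i <;> fin_cases j <;> simp [pow_succ]

lemma gl_conj {ω' c' : ℂ} (hω' : ω' ≠ 0) (B A : GL (Fin 2) ℂ)
    (hB : (B : Matrix (Fin 2) (Fin 2) ℂ) = !![ω',0;0,ω'⁻¹])
    (hA : (A : Matrix (Fin 2) (Fin 2) ℂ) = !![0,c';c',0]) :
    B * A * B = A := by
  apply Units.ext
  rw [Units.val_mul, Units.val_mul, hB, hA, Matrix.mul_fin_two, Matrix.mul_fin_two]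
  ext i j
  fin_cases i <;> fin_cases j <;> simp <;> field_simp

theorem stmt3 (k q l : ℕ) (hk : 2 ≤ k) (hq : Odd q) (hq1 : 0 < q) (hl : Odd l)
    (hgcd : Nat.gcd (2 ^ (k + 1) * q) l = 1)
    (m : ℕ) (hm : m = 2 ^ (k - 1) * l)
    (ψ τφ : GL (Fin 2) ℂ)
    (hψ : (ψ : Matrix (Fin 2) (Fin 2) ℂ) = !![zeta (2 * q), 0; 0, (zeta (2 * q))⁻¹])
    (hτφ : (τφ : Matrix (Fin 2) (Fin 2) ℂ) =
      !![0, Complex.I; Complex.I, 0] * !![zeta (4 * m), 0; 0, zeta (4 * m)]) :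
    Nonempty ((Subgroup.closure {ψ, τφ} : Subgroup (GL (Fin 2) ℂ)) ≃*
      PresentedGroup (dihRels k q) × Multiplicative (ZMod l)) := by
  classical
  -- basic numerology
  obtain ⟨k', rfl⟩ : ∃ k', k = k' + 2 := ⟨k - 2, by omega⟩
  have hm' : m = 2 ^ (k' + 1) * l := hm
  have hl0 : 0 < l := hl.pos
  haveI : NeZero l := ⟨hl0.ne'⟩
  have hm0 : 0 < m := by
    rw [hm']; positivity
  have h4m0 : 0 < 4 * m := by omega
  have hq2 : 0 < 2 * q := by omega
  set P : ℕ := 2 ^ (k' + 3) with hPdef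
  have hP0 : 0 < P := by positivity
  have hP2 : 2 ∣ P := dvd_pow_self 2 (by omega : k' + 3 ≠ 0)
  have h4m : 4 * m = P * l := by
    rw [hm', hPdef]
    ring
  have h2m : 2 * m = 2 ^ (k' + 2) * l := by
    rw [hm']
    ring
  have h4m1 : 1 < 4 * m := by omega
  -- coprimality
  have hcopPl : Nat.Coprime P l := Nat.Coprime.coprime_dvd_left (dvd_mul_right P q) hgcd
  have hcoplP : Nat.Coprime l P := hcopPl.symm
  -- scalars
  set ω : ℂ := zeta (2 * q) with hωdef
  set ζ : ℂ := zeta (4 * m) with hζdef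
  have hωne : ω ≠ 0 := zeta_ne_zero _
  have hζne : ζ ≠ 0 := zeta_ne_zero _
  set c : ℂ := Complex.I * ζ with hcdef
  have hcne : c ≠ 0 := mul_ne_zero Complex.I_ne_zero hζne
  have hcζ : c = ζ ^ (m + 1) := by
    rw [pow_succ, hcdef, hζdef, ← zeta_pow_quarter hm0]
  have hω1 : ∀ n : ℕ, (ω ^ n = 1 ↔ 2 * q ∣ n) := fun n => zeta_pow_eq_one_iff hq2 n
  have hωq : ω ^ q = -1 := zeta_pow_half hq1
  have hωq1 : ω ^ (q + 1) = -ω := by rw [pow_succ, hωq]; ring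
  have hζ2m : ζ ^ (2 * m) = -1 := by
    rw [hζdef, show 4 * m = 2 * (2 * m) by ring]
    exact zeta_pow_half (by omega)
  have hmeven : Even m := by
    rw [hm']
    exact ⟨2 ^ k' * l, by ring⟩
  have hm1odd : Odd (m + 1) := hmeven.add_one
  have hcop_m1 : Nat.Coprime (4 * m) (m + 1) := by
    have h1 : Nat.Coprime (m + 1) 4 := by
      have : Nat.Coprime (m + 1) 2 := by
        simpa using hm1odd.coprime_two_right
      simpa [show (4 : ℕ) = 2 ^ 2 by norm_num] using this.pow_right 2
    have h2 : Nat.Coprime (m + 1) m := by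
      have := (Nat.coprime_add_self_left (m := 1) (n := m)).2 (Nat.coprime_one_left m)
      simpa [Nat.add_comm] using this
    exact (Nat.Coprime.mul_right h1 h2).symm
  have hc1 : ∀ n : ℕ, (c ^ n = 1 ↔ 4 * m ∣ n) := by
    intro n
    rw [hcζ, ← pow_mul, zeta_pow_eq_one_iff h4m0]
    constructor
    · intro h
      exact hcop_m1.dvd_of_dvd_mul_left h
    · intro h
      exact Dvd.dvd.mul_left h (m + 1)
  -- GL facts
  have hψv : (ψ : Matrix (Fin 2) (Fin 2) ℂ) = !![ω,0;0,ω⁻¹] := hψ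
  have hav : (τφ : Matrix (Fin 2) (Fin 2) ℂ) = !![0,c;c,0] := by
    rw [hτφ, Matrix.mul_fin_two]
    ext i j
    fin_cases i <;> fin_cases j <;> simp [hcdef]
  have hψpow := gl_diag_pow hωne ψ hψv
  have hapow := gl_anti_pow c τφ hav
  have hψord : ψ ^ (2 * q) = 1 := by
    apply Units.ext
    rw [hψpow, Units.val_one, Matrix.one_fin_two, (hω1 _).2 dvd_rfl, inv_one]
  have hτφ_dvd : ∀ {n : ℕ}, 4 * m ∣ n → τφ ^ n = 1 := by
    intro n hd
    have he : Even n := by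
      obtain ⟨t, rfl⟩ := hd
      exact ⟨2 * m * t, by ring⟩
    apply Units.ext
    rw [hapow, if_pos he, (hc1 n).2 hd, Units.val_one, Matrix.one_fin_two]
  have hτφ_modeq : ∀ e : ℕ, e ≡ 1 [MOD 4 * m] → τφ ^ e = τφ := by
    intro e he
    have h1 : e % (4 * m) = 1 := by
      have := he
      unfold Nat.ModEq at this
      rwa [Nat.mod_eq_of_lt h4m1] at this
    have hdecomp : e = 4 * m * (e / (4 * m)) + 1 := by
      have := Nat.div_add_mod e (4 * m)
      omega
    rw [hdecomp, pow_add, pow_mul, hτφ_dvd dvd_rfl, one_pow, one_mul, pow_one]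
  -- arithmetic: the CRT exponents α and β
  set u : ℕ := ((l : ZMod P))⁻¹.val with hudef
  set v : ℕ := ((P : ZMod l))⁻¹.val with hvdef
  haveI : NeZero P := ⟨hP0.ne'⟩
  have hlu : l * u ≡ 1 [MOD P] := by
    have hcast : ((l * u : ℕ) : ZMod P) = ((1 : ℕ) : ZMod P) := by
      push_cast [hudef, ZMod.natCast_zmod_val]
      exact ZMod.coe_mul_inv_eq_one l hcoplP
    exact (ZMod.natCast_eq_natCast_iff _ _ _).1 hcast
  have hPv : P * v ≡ 1 [MOD l] := by
    have hcast : ((P * v : ℕ) : ZMod l) = ((1 : ℕ) : ZMod l) := by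
      push_cast [hvdef, ZMod.natCast_zmod_val]
      exact ZMod.coe_mul_inv_eq_one P hcopPl
    exact (ZMod.natCast_eq_natCast_iff _ _ _).1 hcast
  set α : ℕ := l * u with hαdef
  set β : ℕ := P * v with hβdef
  have hαP : α ≡ 1 [MOD P] := hlu
  have hβl : β ≡ 1 [MOD l] := hPv
  have hlα : l ∣ α := dvd_mul_right l u
  have hPβ : P ∣ β := dvd_mul_right P v
  have hβeven : Even β := by
    obtain ⟨t, ht⟩ := hP2.trans hPβ
    exact ⟨t, by omega⟩
  have hu_odd : Odd u := by
    have h2 : l * u ≡ 1 [MOD 2] := Nat.ModEq.of_dvd hP2 hlu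
    have hlu_odd : Odd (l * u) := Nat.odd_iff.2 (by simpa [Nat.ModEq] using h2)
    exact (Nat.odd_mul.1 hlu_odd).2
  have hαodd : Odd α := hl.mul hu_odd
  have hcrt : ∀ {a b : ℕ}, a ≡ b [MOD P] → a ≡ b [MOD l] → a ≡ b [MOD 4 * m] := by
    intro a b h1 h2
    rw [h4m]
    exact (Nat.modEq_and_modEq_iff_modEq_mul hcopPl).1 ⟨h1, h2⟩
  -- the subgroup H and its generators
  set H : Subgroup (GL (Fin 2) ℂ) := Subgroup.closure {ψ, τφ} with hHdef
  have hψH : ψ ∈ H := Subgroup.subset_closure (Set.mem_insert _ _)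
  have haH : τφ ∈ H := Subgroup.subset_closure (Set.mem_insert_of_mem _ rfl)
  -- the presented group and its generators
  set X : PresentedGroup (dihRels (k' + 2) q) := PresentedGroup.of 0 with hXdef
  set Y : PresentedGroup (dihRels (k' + 2) q) := PresentedGroup.of 1 with hYdef
  have hrel_one : ∀ r ∈ dihRels (k' + 2) q, PresentedGroup.mk (dihRels (k' + 2) q) r = 1 := fun r hr =>
    (QuotientGroup.eq_one_iff r).2 (Subgroup.subset_normalClosure hr)
  have hr1mem : (FreeGroup.of 0 ^ 2 ^ (k' + 3) : FreeGroup (Fin 2)) ∈ dihRels (k' + 2) q :=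
    Set.mem_insert _ _
  have hr2mem : (FreeGroup.of 1 ^ q : FreeGroup (Fin 2)) ∈ dihRels (k' + 2) q :=
    Set.mem_insert_of_mem _ (Set.mem_insert _ _)
  have hr3mem : (FreeGroup.of 0 * FreeGroup.of 1 * (FreeGroup.of 0)⁻¹ * FreeGroup.of 1 :
      FreeGroup (Fin 2)) ∈ dihRels (k' + 2) q :=
    Set.mem_insert_of_mem _ (Set.mem_insert_of_mem _ rfl)
  have hXP : X ^ P = 1 := by
    rw [hXdef]
    show (PresentedGroup.mk (dihRels (k' + 2) q) (FreeGroup.of 0)) ^ P = 1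
    rw [← map_pow]
    exact hrel_one _ hr1mem
  have hYq : Y ^ q = 1 := by
    rw [hYdef]
    show (PresentedGroup.mk (dihRels (k' + 2) q) (FreeGroup.of 1)) ^ q = 1
    rw [← map_pow]
    exact hrel_one _ hr2mem
  have hrel3 : X * Y * X⁻¹ * Y = 1 := by
    rw [hXdef, hYdef]
    show (PresentedGroup.mk (dihRels (k' + 2) q) (FreeGroup.of 0))
      * (PresentedGroup.mk (dihRels (k' + 2) q) (FreeGroup.of 1))
      * (PresentedGroup.mk (dihRels (k' + 2) q) (FreeGroup.of 0))⁻¹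
      * (PresentedGroup.mk (dihRels (k' + 2) q) (FreeGroup.of 1)) = 1
    rw [← _root_.map_inv, ← _root_.map_mul, ← _root_.map_mul, ← _root_.map_mul]
    exact hrel_one _ hr3mem
  have hXYX : X * Y * X⁻¹ = Y⁻¹ := mul_eq_one_iff_eq_inv.1 hrel3
  have hXYX' : X⁻¹ * Y * X = Y⁻¹ := by
    have h2 : Y = X⁻¹ * Y⁻¹ * X := by
      rw [← hXYX]; group
    have h3 := congrArg (fun z => z⁻¹) h2
    simp only [_root_.mul_inv_rev, inv_inv] at h3
    rw [h3]; group
  have hYinv : Y⁻¹ = Y ^ (q - 1) := by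
    apply inv_eq_of_mul_eq_one_left
    rw [← pow_succ, show (q - 1) + 1 = q by omega, hYq]
  have hXinv : X⁻¹ = X ^ (P - 1) := by
    apply inv_eq_of_mul_eq_one_left
    rw [← pow_succ, show (P - 1) + 1 = P by omega, hXP]
  -- normal form in the presented group
  have hswap1 : ∀ jj : ℕ, Y ^ jj * X = X * Y ^ ((q - 1) * jj) := by
    intro jj
    have hconj : X⁻¹ * Y ^ jj * (X⁻¹)⁻¹ = (X⁻¹ * Y * (X⁻¹)⁻¹) ^ jj := by
      have := map_pow (MulAut.conj X⁻¹) Y jj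
      simpa [MulAut.conj_apply] using this
    rw [inv_inv] at hconj
    have h2 : X⁻¹ * Y ^ jj * X = Y ^ ((q-1) * jj) := by
      rw [hconj, hXYX', hYinv, ← pow_mul]
    calc Y ^ jj * X = X * (X⁻¹ * Y ^ jj * X) := by group
    _ = X * Y ^ ((q-1) * jj) := by rw [h2]
  have hswapN : ∀ ii jj : ℕ, ∃ j' : ℕ, Y ^ jj * X ^ ii = X ^ ii * Y ^ j' := by
    intro ii
    induction ii with
    | zero => exact fun jj => ⟨jj, by simp⟩
    | succ n ih =>
      intro jj
      obtain ⟨j', hj'⟩ := ih ((q - 1) * jj)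
      refine ⟨j', ?_⟩
      calc Y ^ jj * X ^ (n + 1) = (Y ^ jj * X) * X ^ n := by
            rw [pow_succ']; group
      _ = X * (Y ^ ((q-1) * jj) * X ^ n) := by rw [hswap1]; group
      _ = X * (X ^ n * Y ^ j') := by rw [hj']
      _ = X ^ (n + 1) * Y ^ j' := by rw [pow_succ']; group
  have hnf : ∀ d : PresentedGroup (dihRels (k' + 2) q), ∃ i j : ℕ, d = X ^ i * Y ^ j := by
    intro d
    have hd : d ∈ Subgroup.closure (Set.range (PresentedGroup.of (rels := dihRels (k' + 2) q))) := by
      rw [PresentedGroup.closure_range_of]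
      trivial
    refine Subgroup.closure_induction ?_ ?_ ?_ ?_ hd
    · rintro x ⟨t, rfl⟩
      fin_cases t
      · exact ⟨1, 0, by simp [hXdef]⟩
      · exact ⟨0, 1, by simp [hYdef]⟩
    · exact ⟨0, 0, by simp⟩
    · rintro g1 g2 _ _ ⟨i1, j1, rfl⟩ ⟨i2, j2, rfl⟩
      obtain ⟨j', hs⟩ := hswapN i2 j1
      refine ⟨i1 + i2, j' + j2, ?_⟩
      calc X^i1 * Y^j1 * (X^i2 * Y^j2) = X^i1 * ((Y^j1 * X^i2) * Y^j2) := by group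
      _ = X^i1 * ((X^i2 * Y^j') * Y^j2) := by rw [hs]
      _ = (X^i1 * X^i2) * (Y^j' * Y^j2) := by group
      _ = X^(i1+i2) * Y^(j'+j2) := by rw [pow_add, pow_add]
    · rintro g _ ⟨i, j, rfl⟩
      obtain ⟨j', hs⟩ := hswapN ((P-1) * i) ((q-1) * j)
      refine ⟨(P - 1) * i, j', ?_⟩
      calc (X^i * Y^j)⁻¹ = (Y^j)⁻¹ * (X^i)⁻¹ := by rw [_root_.mul_inv_rev]
      _ = (Y⁻¹)^j * (X⁻¹)^i := by rw [inv_pow, inv_pow]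
      _ = Y^((q-1)*j) * X^((P-1)*i) := by
            rw [hYinv, hXinv, ← pow_mul, ← pow_mul]
      _ = X^((P-1)*i) * Y^j' := hs
  -- the map f' : D →* H
  have hdvd_r1 : 4 * m ∣ α * P := by
    rw [h4m, hαdef]
    exact ⟨u, by ring⟩
  set F : Fin 2 → H := ![⟨τφ ^ α, pow_mem haH α⟩, ⟨ψ ^ 2, pow_mem hψH 2⟩] with hFdef
  have hF0 : F 0 = ⟨τφ ^ α, pow_mem haH α⟩ := by rw [hFdef]; simp
  have hF1 : F 1 = ⟨ψ ^ 2, pow_mem hψH 2⟩ := by rw [hFdef]; simp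
  -- the conjugation relation in GL
  have hconjGL : τφ ^ α * ψ ^ 2 * (τφ ^ α)⁻¹ * ψ ^ 2 = 1 := by
    have hB : ((ψ^2 : GL (Fin 2) ℂ) : Matrix (Fin 2) (Fin 2) ℂ) = !![ω^2,0;0,(ω^2)⁻¹] :=
      hψpow 2
    have hA : ((τφ^α : GL (Fin 2) ℂ) : Matrix (Fin 2) (Fin 2) ℂ) = !![0,c^α;c^α,0] := by
      rw [hapow, if_neg (Nat.not_even_iff_odd.2 hαodd)]
    have hBAB : (ψ^2) * (τφ^α) * (ψ^2) = τφ^α :=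
      gl_conj (pow_ne_zero 2 hωne) _ _ hB hA
    have h1 : (τφ^α) * (ψ^2) = (ψ^2)⁻¹ * (τφ^α) := by
      conv_rhs => rw [← hBAB]
      group
    rw [h1]
    group
  have hliftF : ∀ r ∈ dihRels (k' + 2) q, FreeGroup.lift F r = 1 := by
    intro r hr
    rcases hr with hr | hr | hr
    · subst hr
      rw [map_pow, FreeGroup.lift_apply_of, hF0]
      apply Subtype.ext
      show (τφ ^ α) ^ 2 ^ (k' + 3) = 1
      rw [← pow_mul]
      exact hτφ_dvd hdvd_r1
    · subst hr
      rw [map_pow, FreeGroup.lift_apply_of, hF1]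
      apply Subtype.ext
      show (ψ ^ 2) ^ q = 1
      rw [← pow_mul]
      exact hψord
    · rw [Set.mem_singleton_iff] at hr
      subst hr
      simp only [_root_.map_mul, _root_.map_inv, FreeGroup.lift_apply_of, hF0, hF1]
      apply Subtype.ext
      show τφ ^ α * ψ ^ 2 * (τφ ^ α)⁻¹ * ψ ^ 2 = 1
      exact hconjGL
  set f' : PresentedGroup (dihRels (k' + 2) q) →* H := PresentedGroup.toGroup hliftF with hf'def
  have hf'X : f' X = F 0 := PresentedGroup.toGroup.of hliftF
  have hf'Y : f' Y = F 1 := PresentedGroup.toGroup.of hliftF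
  -- the map g' : Multiplicative (ZMod l) →* H
  have hdvd_bl : 4 * m ∣ β * l := by
    rw [h4m, hβdef]
    exact ⟨v, by ring⟩
  set bH : H := ⟨τφ ^ β, pow_mem haH β⟩ with hbHdef
  have hbHl : bH ^ l = 1 := by
    apply Subtype.ext
    show (τφ ^ β) ^ l = 1
    rw [← pow_mul]
    exact hτφ_dvd hdvd_bl
  have hbl0 : (zmultiplesHom (Additive H) (Additive.ofMul bH)) (l : ℤ) = 0 := by
    show (l : ℤ) • (Additive.ofMul bH) = 0
    rw [← ofMul_zpow, zpow_natCast, hbHl]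
    rfl
  set gAdd : ZMod l →+ Additive H :=
    ZMod.lift l ⟨zmultiplesHom (Additive H) (Additive.ofMul bH), hbl0⟩ with hgAdddef
  set g' : Multiplicative (ZMod l) →* H := AddMonoidHom.toMultiplicativeLeft gAdd with hg'def
  have hg'eval : ∀ cc : Multiplicative (ZMod l), g' cc = bH ^ (Multiplicative.toAdd cc).val := by
    intro cc
    have h2 : Multiplicative.toAdd cc
        = (((Multiplicative.toAdd cc).val : ℤ) : ZMod l) := by
      rw [Int.cast_natCast, ZMod.natCast_zmod_val]
    have h3 : gAdd (Multiplicative.toAdd cc)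
        = ((Multiplicative.toAdd cc).val : ℤ) • Additive.ofMul bH := by
      conv_lhs => rw [h2]
      rw [hgAdddef, ZMod.lift_coe]
      rfl
    show Additive.toMul (gAdd (Multiplicative.toAdd cc)) = _
    rw [h3, toMul_zsmul, toMul_ofMul, zpow_natCast]
  -- commutation
  have hGLcomm : Commute (τφ ^ β) ψ := by
    show τφ ^ β * ψ = ψ * τφ ^ β
    apply Units.ext
    rw [Units.val_mul, Units.val_mul, hapow β, if_pos hβeven, hψv, scalar_comm]
  have hb0 : Commute bH (F 0) := by
    show bH * F 0 = F 0 * bH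
    apply Subtype.ext
    rw [hF0]
    show τφ ^ β * τφ ^ α = τφ ^ α * τφ ^ β
    exact ((Commute.refl τφ).pow_pow β α)
  have hb1 : Commute bH (F 1) := by
    show bH * F 1 = F 1 * bH
    apply Subtype.ext
    rw [hF1]
    show τφ ^ β * ψ ^ 2 = ψ ^ 2 * τφ ^ β
    exact (hGLcomm.pow_right 2)
  have hcomm : ∀ d cc, Commute (f' d) (g' cc) := by
    intro d cc
    rw [hg'eval]
    obtain ⟨i, j, rfl⟩ := hnf d
    have hcb : Commute bH (f' (X ^ i * Y ^ j)) := by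
      rw [_root_.map_mul, map_pow, map_pow, hf'X, hf'Y]
      exact (hb0.pow_right i).mul_right (hb1.pow_right j)
    exact (hcb.pow_left _).symm
  set Φ : PresentedGroup (dihRels (k' + 2) q) × Multiplicative (ZMod l) →* H :=
    f'.noncommCoprod g' hcomm with hΦdef
  have hΦval : ∀ d cc, ((Φ (d, cc) : H) : GL (Fin 2) ℂ)
      = ((f' d : H) : GL (Fin 2) ℂ) * ((g' cc : H) : GL (Fin 2) ℂ) := by
    intro d cc
    rw [hΦdef, MonoidHom.noncommCoprod_apply]
    rfl
  have hf'val : ∀ i j : ℕ, ((f' (X ^ i * Y ^ j) : H) : GL (Fin 2) ℂ)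
      = τφ ^ (α * i) * ψ ^ (2 * j) := by
    intro i j
    rw [_root_.map_mul, map_pow, map_pow, hf'X, hf'Y, hF0, hF1]
    show ((⟨τφ ^ α, pow_mem haH α⟩ : H) ^ i * (⟨ψ ^ 2, pow_mem hψH 2⟩ : H) ^ j : H).1 = _
    rw [MulMemClass.coe_mul, SubmonoidClass.coe_pow, SubmonoidClass.coe_pow]
    rw [← pow_mul, ← pow_mul]
  -- injectivity
  have hinj : Function.Injective Φ := by
    rw [injective_iff_map_eq_one]
    rintro ⟨d, cc⟩ hp
    obtain ⟨i, j, rfl⟩ := hnf d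
    set cv : ℕ := (Multiplicative.toAdd cc).val with hcvdef
    have h1 : ((Φ (X ^ i * Y ^ j, cc) : H) : GL (Fin 2) ℂ) = 1 := by rw [hp]; rfl
    rw [hΦval, hg'eval, hf'val] at h1
    have hval : τφ ^ (α * i) * ψ ^ (2 * j) * τφ ^ (β * cv) = 1 := by
      rw [← h1]
      congr 1
      show τφ ^ (β * cv) = ((bH ^ cv : H) : GL (Fin 2) ℂ)
      rw [SubmonoidClass.coe_pow]
      show τφ ^ (β * cv) = (τφ ^ β) ^ cv
      rw [pow_mul]
    have hmat := congrArg Units.val hval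
    rw [Units.val_mul, Units.val_mul, hψpow, hapow, hapow,
      if_pos (hβeven.mul_right cv), Units.val_one] at hmat
    rcases Nat.even_or_odd (α * i) with hTe | hTo
    · rw [if_pos hTe, diag_mul, diag_mul, Matrix.one_fin_two] at hmat
      have h00 : c ^ (α*i) * ω ^ (2*j) * c ^ (β*cv) = 1 := by
        have := congrFun (congrFun hmat 0) 0; simpa using this
      have h11 : c ^ (α*i) * (ω ^ (2*j))⁻¹ * c ^ (β*cv) = 1 := by
        have := congrFun (congrFun hmat 1) 1; simpa using this
      have hS : ω ^ (2*j) * (c ^ (α*i) * c ^ (β*cv)) = 1 := by linear_combination h00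
      have hS' : (ω ^ (2*j))⁻¹ * (c ^ (α*i) * c ^ (β*cv)) = 1 := by linear_combination h11
      have hωUne : ω ^ (2*j) ≠ 0 := pow_ne_zero _ hωne
      have hCV : ω ^ (2*j) = c ^ (α*i) * c ^ (β*cv) := (inv_mul_eq_one₀ hωUne).1 hS'
      rw [← hCV] at hS
      have hU4 : ω ^ (2*j + 2*j) = 1 := by rw [pow_add]; exact hS
      have hdvd : 2*q ∣ 2*j + 2*j := (hω1 _).1 hU4
      have hq2j : q ∣ 2*j := by
        obtain ⟨t, ht⟩ := hdvd
        have ht2 : 2*j + 2*j = 2*(q*t) := by rw [ht]; ring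
        exact ⟨t, by omega⟩
      have hqj : q ∣ j := (hq.coprime_two_right).dvd_of_dvd_mul_left hq2j
      have hU1 : ω ^ (2*j) = 1 := (hω1 _).2 (mul_dvd_mul_left 2 hqj)
      have hCT : c ^ (α*i + β*cv) = 1 := by rw [pow_add, ← hCV, hU1]
      have h4mdvd : 4*m ∣ α*i + β*cv := (hc1 _).1 hCT
      have hldvd : l ∣ α*i + β*cv := dvd_trans ⟨P, by rw [h4m]; ring⟩ h4mdvd
      have hlT : l ∣ α*i := hlα.mul_right i
      have hlV : l ∣ β*cv := by
        have := Nat.dvd_sub hldvd hlT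
        simpa using this
      have hlcv : l ∣ cv := by
        have ha1 : β*cv ≡ cv [MOD l] := by simpa using hβl.mul_right cv
        have ha2 : β*cv ≡ 0 [MOD l] := (Nat.modEq_zero_iff_dvd).2 hlV
        exact (Nat.modEq_zero_iff_dvd).1 (ha1.symm.trans ha2)
      have hcv0 : cv = 0 := Nat.eq_zero_of_dvd_of_lt hlcv (ZMod.val_lt _)
      have hccone : cc = 1 := by
        have hta : Multiplicative.toAdd cc = 0 := (ZMod.val_eq_zero _).1 hcv0
        rw [← ofAdd_toAdd cc, hta]
        rfl
      have hPdvd : P ∣ α*i := by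
        have h5 : P ∣ α*i + β*cv := dvd_trans ⟨l, by rw [h4m]⟩ h4mdvd
        simpa [hcv0] using h5
      have hPi : P ∣ i := by
        have ha1 : α*i ≡ i [MOD P] := by simpa using hαP.mul_right i
        have ha2 : α*i ≡ 0 [MOD P] := (Nat.modEq_zero_iff_dvd).2 hPdvd
        exact (Nat.modEq_zero_iff_dvd).1 (ha1.symm.trans ha2)
      have hXi : X ^ i = 1 := by
        obtain ⟨t, rfl⟩ := hPi; rw [pow_mul, hXP, one_pow]
      have hYj : Y ^ j = 1 := by
        obtain ⟨t, rfl⟩ := hqj; rw [pow_mul, hYq, one_pow]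
      exact Prod.mk_eq_one.2 ⟨by rw [hXi, hYj, one_mul], hccone⟩
    · exfalso
      rw [if_neg (Nat.not_even_iff_odd.2 hTo), Matrix.mul_fin_two, Matrix.mul_fin_two,
        Matrix.one_fin_two] at hmat
      have h00 := congrFun (congrFun hmat 0) 0
      simp at h00
  -- surjectivity
  have hsurj : Function.Surjective Φ := by
    set Θ : PresentedGroup (dihRels (k' + 2) q) × Multiplicative (ZMod l) →* GL (Fin 2) ℂ :=
      H.subtype.comp Φ with hΘdef
    have hΘval : ∀ d cc, Θ (d, cc)
        = ((f' d : H) : GL (Fin 2) ℂ) * ((g' cc : H) : GL (Fin 2) ℂ) := by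
      intro d cc
      show ((Φ (d, cc) : H) : GL (Fin 2) ℂ) = _
      exact hΦval d cc
    -- ψ is in the range
    have hcE : c ^ (α * 2 ^ (k' + 2)) = -1 := by
      have hexp : (m + 1) * (α * 2 ^ (k' + 2)) = (2 * m) * ((m + 1) * u) := by
        rw [h2m, hαdef]; ring
      rw [hcζ, ← pow_mul, hexp, pow_mul, hζ2m]
      exact Odd.neg_one_pow (hm1odd.mul hu_odd)
    have hsval : 2 * ((q+1)/2) = q + 1 := by obtain ⟨r, rfl⟩ := hq; omega
    have hψeq : ψ ^ (q + 1) * τφ ^ (α * 2 ^ (k' + 2)) = ψ := by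
      apply Units.ext
      have heven : Even (α * 2 ^ (k' + 2)) :=
        Even.mul_left (⟨2 ^ (k' + 1), by ring⟩ : Even (2 ^ (k' + 2))) α
      rw [Units.val_mul, hψpow, hapow, if_pos heven, diag_mul, hcE, hψv, hωq1]
      ext i j
      fin_cases i <;> fin_cases j <;> simp [inv_neg]
    have hψrange : ψ ∈ Θ.range := by
      refine ⟨(Y ^ ((q+1)/2) * X ^ (2 ^ (k' + 2)), 1), ?_⟩
      rw [hΘval, _root_.map_one]
      have hfv : ((f' (Y ^ ((q+1)/2) * X ^ (2 ^ (k' + 2))) : H) : GL (Fin 2) ℂ)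
          = ψ ^ (q + 1) * τφ ^ (α * 2 ^ (k' + 2)) := by
        rw [_root_.map_mul, map_pow, map_pow, hf'X, hf'Y, hF0, hF1]
        rw [MulMemClass.coe_mul, SubmonoidClass.coe_pow, SubmonoidClass.coe_pow]
        show (ψ ^ 2) ^ ((q+1)/2) * (τφ ^ α) ^ (2 ^ (k' + 2)) = _
        rw [← pow_mul, ← pow_mul, hsval]
      rw [hfv]
      show ψ ^ (q + 1) * τφ ^ (α * 2 ^ (k' + 2)) * ((1 : H) : GL (Fin 2) ℂ) = ψ
      rw [OneMemClass.coe_one, mul_one]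
      exact hψeq
    -- τφ is in the range
    have hτφrange : τφ ∈ Θ.range := by
      refine ⟨(X, Multiplicative.ofAdd 1), ?_⟩
      rw [hΘval]
      set w : ℕ := ((1 : ZMod l)).val with hwdef
      have hgv : ((g' (Multiplicative.ofAdd (1 : ZMod l)) : H) : GL (Fin 2) ℂ) = τφ ^ (β * w) := by
        rw [hg'eval]
        rw [SubmonoidClass.coe_pow]
        show (τφ ^ β) ^ (Multiplicative.toAdd (Multiplicative.ofAdd (1 : ZMod l))).val = _
        rw [toAdd_ofAdd, ← pow_mul]
      have hfv : ((f' X : H) : GL (Fin 2) ℂ) = τφ ^ α := by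
        rw [hf'X, hF0]
      rw [hfv, hgv, ← pow_add]
      have hw1 : w ≡ 1 [MOD l] := by
        have : ((w : ℕ) : ZMod l) = ((1 : ℕ) : ZMod l) := by
          rw [hwdef, ZMod.natCast_zmod_val, Nat.cast_one]
        exact (ZMod.natCast_eq_natCast_iff _ _ _).1 this
      have hmodP : α + β * w ≡ 1 [MOD P] := by
        have h0 : β * w ≡ 0 [MOD P] := (Nat.modEq_zero_iff_dvd).2 (hPβ.mul_right w)
        simpa using hαP.add h0
      have hmodl : α + β * w ≡ 1 [MOD l] := by
        have h0 : α ≡ 0 [MOD l] := (Nat.modEq_zero_iff_dvd).2 hlα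
        have h1 : β * w ≡ 1 [MOD l] := by
          have h2 : β * w ≡ w [MOD l] := by simpa using hβl.mul_right w
          exact h2.trans hw1
        simpa using h0.add h1
      exact hτφ_modeq _ (hcrt hmodP hmodl)
    have hle : H ≤ Θ.range := by
      rw [hHdef]
      apply (Subgroup.closure_le _).2
      rintro x hx
      rcases hx with rfl | hx
      · exact hψrange
      · rw [Set.mem_singleton_iff] at hx
        subst hx
        exact hτφrange
    intro h_elem
    obtain ⟨p, hp⟩ := hle h_elem.2
    exact ⟨p, Subtype.ext hp⟩
  exact ⟨(MulEquiv.ofBijective Φ ⟨hinj, hsurj⟩).symm⟩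
end
end

section
/- The group P'_{8·3^k} has exactly 7·3^{k−1} irreducible complex representations: 3^k one-dimensional, 3^k two-dimensional, and 3^{k−1} three-dimensional, and the sum of squares of dimensions 3^k + 4·3^k + 9·3^{k−1} equals the order 8·3^k. -/
/-- Relators of P'_{8·3^k} = ⟨x,y,z | x² = (xy)² = y², zxz⁻¹ = y, zyz⁻¹ = xy, z^{3^k} = 1⟩. -/
def ppRels (k : ℕ) : Set (FreeGroup (Fin 3)) :=
  {FreeGroup.of 0 ^ 2 * ((FreeGroup.of 0 * FreeGroup.of 1) ^ 2)⁻¹,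
   (FreeGroup.of 0 * FreeGroup.of 1) ^ 2 * (FreeGroup.of 1 ^ 2)⁻¹,
   FreeGroup.of 2 * FreeGroup.of 0 * (FreeGroup.of 2)⁻¹ * (FreeGroup.of 1)⁻¹,
   FreeGroup.of 2 * FreeGroup.of 1 * (FreeGroup.of 2)⁻¹ * (FreeGroup.of 0 * FreeGroup.of 1)⁻¹,
   FreeGroup.of 2 ^ 3 ^ k}

namespace Stmt13Aux
open QuaternionGroup

abbrev Q8 := QuaternionGroup 2

/-- the order-3 automorphism x ↦ y ↦ xy of Q8, where x = a 1, y = xa 0. -/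
def sf : Q8 → Q8
  | .a i => if i = 1 then .xa 0 else if i = 3 then .xa 2 else .a i
  | .xa i => if i = 0 then .xa 3 else if i = 1 then .a 3 else if i = 2 then .xa 1 else .a 1

def σ : MulAut Q8 where
  toFun := sf
  invFun := sf ∘ sf
  left_inv := by decide
  right_inv := by decide
  map_mul' := by decide

lemma sigma_cube : ∀ q : Q8, σ (σ (σ q)) = q := by decide

lemma σ3eq : σ ^ 3 = 1 := by
  ext q
  show σ (σ (σ q)) = q
  exact sigma_cube q

lemma σpow_mod (n : ℕ) : σ ^ (n % 3) = σ ^ n := by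
  conv_rhs => rw [← Nat.div_add_mod n 3, pow_add, pow_mul, σ3eq, one_pow, one_mul]

instance instNeZero3k (k : ℕ) : NeZero (3 ^ k) := ⟨pow_ne_zero k (by norm_num)⟩

abbrev M (k : ℕ) := Multiplicative (ZMod (3 ^ k))

lemma val_M_zero (t : ZMod (3 ^ 0)) : t.val = 0 := by
  have := ZMod.val_lt t
  omega

/-- the action of `M k` on Q8 through σ. -/
def φ (k : ℕ) : M k →* MulAut Q8 where
  toFun t := σ ^ (t.toAdd.val)
  map_one' := by
    show σ ^ (0 : ZMod (3^k)).val = 1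
    rw [ZMod.val_zero, pow_zero]
  map_mul' s t := by
    show σ ^ ((s.toAdd + t.toAdd : ZMod (3^k)).val)
      = σ ^ (s.toAdd.val) * σ ^ (t.toAdd.val)
    rcases Nat.eq_zero_or_pos k with rfl | hk
    · rw [val_M_zero s.toAdd, val_M_zero t.toAdd, val_M_zero (s.toAdd + t.toAdd)]; simp
    · have h3 : (3 : ℕ) ∣ 3 ^ k := dvd_pow_self 3 (by omega)
      rw [ZMod.val_add, ← σpow_mod ((_ + _) % 3 ^ k), Nat.mod_mod_of_dvd _ h3,
        σpow_mod, pow_add]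

abbrev C (k : ℕ) := SemidirectProduct Q8 (M k) (φ k)

/-! ### relations inside the presented group -/

variable {k : ℕ}

abbrev P (k : ℕ) := PresentedGroup (ppRels k)

def X : P k := PresentedGroup.of 0
def Y : P k := PresentedGroup.of 1
def Z : P k := PresentedGroup.of 2

lemma relP {r : FreeGroup (Fin 3)} (h : r ∈ ppRels k) :
    PresentedGroup.mk (ppRels k) r = 1 :=
  (QuotientGroup.eq_one_iff r).mpr (Subgroup.subset_normalClosure h)

lemma e1 : (X : P k) ^ 2 = ((X : P k) * Y) ^ 2 := by
  have h := relP (k := k) (r := FreeGroup.of 0 ^ 2 * ((FreeGroup.of 0 * FreeGroup.of 1) ^ 2)⁻¹)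
    (by simp [ppRels])
  simp only [map_mul, map_pow, map_inv] at h
  rw [mul_inv_eq_one] at h
  exact h

lemma e2 : ((X : P k) * Y) ^ 2 = (Y : P k) ^ 2 := by
  have h := relP (k := k)
    (r := (FreeGroup.of 0 * FreeGroup.of 1) ^ 2 * ((FreeGroup.of 1 : FreeGroup (Fin 3)) ^ 2)⁻¹)
    (by simp [ppRels])
  simp only [map_mul, map_pow, map_inv] at h
  rw [mul_inv_eq_one] at h
  exact h

lemma eZX : (Z : P k) * X * Z⁻¹ = Y := by
  have h := relP (k := k)
    (r := FreeGroup.of 2 * FreeGroup.of 0 * (FreeGroup.of 2)⁻¹ * ((FreeGroup.of 1 : FreeGroup (Fin 3)))⁻¹)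
    (by simp [ppRels])
  simp only [map_mul, map_inv] at h
  rw [mul_inv_eq_one] at h
  exact h

lemma eZY : (Z : P k) * Y * Z⁻¹ = X * Y := by
  have h := relP (k := k)
    (r := FreeGroup.of 2 * FreeGroup.of 1 * (FreeGroup.of 2)⁻¹ * ((FreeGroup.of 0 * FreeGroup.of 1 : FreeGroup (Fin 3)))⁻¹)
    (by simp [ppRels])
  simp only [map_mul, map_inv] at h
  rw [mul_inv_eq_one] at h
  exact h

lemma eZ : (Z : P k) ^ 3 ^ k = 1 := by
  have h := relP (k := k) (r := (FreeGroup.of 2 : FreeGroup (Fin 3)) ^ 3 ^ k)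
    (by simp [ppRels])
  simp only [map_pow] at h
  exact h


/-! ### group algebra in P -/

lemma hXYX : (X : P k) * Y * X = Y := by
  have h := e2 (k := k)
  rw [pow_two, pow_two, ← mul_assoc] at h
  exact mul_right_cancel h

lemma hYXY : (Y : P k) * X * Y = X := by
  have h := e1 (k := k)
  rw [pow_two, pow_two, mul_assoc] at h
  have := mul_left_cancel h
  rw [← mul_assoc] at this
  exact this.symm

lemma hXX : (X : P k) * X = Y * Y := by
  have h := (e1 (k := k)).trans e2
  rwa [pow_two, pow_two] at h

lemma h1' (w : P k) : X * (Y * (X * w)) = Y * w := by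
  rw [← mul_assoc, ← mul_assoc, hXYX]

lemma h2' (w : P k) : Y * (X * (Y * w)) = X * w := by
  rw [← mul_assoc, ← mul_assoc, hYXY]

lemma h3' (w : P k) : X * (X * w) = Y * (Y * w) := by
  rw [← mul_assoc, ← mul_assoc, hXX]

lemma l4 (w : P k) : Y * (Y * (Y * (Y * w))) = w := by
  have key : ∀ v : P k, X * v = Y * (Y * (Y * (Y * (X * v)))) := by
    intro v
    calc X * v = Y * (X * (Y * v)) := (h2' v).symm
    _ = Y * (X * (X * (Y * (X * v)))) := by rw [h1' v]
    _ = Y * (Y * (Y * (Y * (X * v)))) := by rw [h3']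
  have h := key (X⁻¹ * w)
  rw [mul_inv_cancel_left] at h
  exact h.symm

lemma l4X (w : P k) : X * (X * (X * (X * w))) = w := by
  rw [h3', h3', l4]

lemma hX4 : (X : P k) ^ 4 = 1 := by
  have h := l4X (1 : P k)
  rw [mul_one] at h
  calc (X : P k)^4 = X * (X * (X * X)) := by
        rw [pow_succ, pow_succ, pow_two, mul_assoc, mul_assoc]
  _ = 1 := h

lemma hXmod (n : ℕ) : (X : P k) ^ (n % 4) = X ^ n := by
  conv_rhs => rw [← Nat.div_add_mod n 4, pow_add, pow_mul, hX4, one_pow, one_mul]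

lemma hXcong {m n : ℕ} (h : m % 4 = n % 4) : (X : P k) ^ m = X ^ n := by
  rw [← hXmod m, ← hXmod n, h]

lemma hpowmul (m : ℕ) (w : P k) : X * (X ^ m * w) = X ^ (m + 1) * w := by
  rw [← mul_assoc, ← pow_succ']

lemma hYX3 (w : P k) : Y * (X * w) = X * (X * (X * (Y * w))) := by
  have h := (l4X (Y * (X * w))).symm
  rw [h]
  rw [h1' w]

lemma swap (n : ℕ) (w : P k) : Y * (X ^ n * w) = X ^ (3 * n) * (Y * w) := by
  induction n generalizing w with
  | zero => simp
  | succ n ih =>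
    rw [pow_succ', mul_assoc, hYX3, ih, hpowmul, hpowmul, hpowmul]
    have : 3 * n + 1 + 1 + 1 = 3 * (n + 1) := by omega
    rw [this]

lemma swap2 (m : ℕ) (w : P k) : X ^ m * (Y * w) = Y * (X ^ (3 * m) * w) := by
  rw [swap (3 * m) w]
  have : X ^ (3 * (3 * m)) = (X : P k) ^ m := hXcong (by omega)
  rw [this]

/-! ### the homomorphism Q8 →* P k -/

def fQfun (k : ℕ) : Q8 → P k
  | .a i => X ^ i.val
  | .xa i => Y * X ^ i.val

lemma zval1 : ∀ i j : ZMod (2*2), (j - i).val % 4 = (3 * i.val + j.val) % 4 := by decide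
lemma zval2 : ∀ i j : ZMod (2*2), (i + j).val % 4 = (i.val + j.val) % 4 := by decide
lemma zval3 : ∀ i j : ZMod (2*2), ((2 : ℕ) + j - i).val % 4 = (2 + (3 * i.val + j.val)) % 4 := by
  decide

def fQ (k : ℕ) : Q8 →* P k :=
  MonoidHom.mk' (fQfun k) (by
    rintro (i | i) (j | j)
    · show (X : P k) ^ (i + j).val = X ^ i.val * X ^ j.val
      rw [← pow_add]
      exact hXcong (zval2 i j)
    · show (Y : P k) * X ^ (j - i).val = X ^ i.val * (Y * X ^ j.val)
      rw [swap2, ← pow_add]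
      congr 1
      exact hXcong (zval1 i j)
    · show (Y : P k) * X ^ (i + j).val = (Y * X ^ i.val) * X ^ j.val
      rw [mul_assoc, ← pow_add]
      congr 1
      exact hXcong (zval2 i j)
    · show (X : P k) ^ (((2 : ℕ) : ZMod (2*2)) + j - i).val = (Y * X ^ i.val) * (Y * X ^ j.val)
      rw [mul_assoc, swap2, ← mul_assoc, ← pow_add]
      rw [show (Y : P k) * Y = X * X from hXX.symm]
      rw [mul_assoc, ← pow_succ', ← pow_succ']
      exact hXcong (by have := zval3 i j; omega))

lemma fQ_a (i : ZMod (2*2)) : fQ k (.a i) = X ^ i.val := rfl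
lemma fQ_xa (i : ZMod (2*2)) : fQ k (.xa i) = Y * X ^ i.val := rfl

/-! ### the homomorphism M k →* P k -/

lemma hZmod (n : ℕ) : (Z : P k) ^ (n % 3 ^ k) = Z ^ n := by
  conv_rhs => rw [← Nat.div_add_mod n (3 ^ k), pow_add, pow_mul, eZ, one_pow, one_mul]

def fZ (k : ℕ) : M k →* P k :=
  MonoidHom.mk' (fun t => Z ^ t.toAdd.val) (by
    intro s t
    show (Z : P k) ^ ((s.toAdd + t.toAdd).val) = Z ^ s.toAdd.val * Z ^ t.toAdd.val
    rw [ZMod.val_add, hZmod, pow_add])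

lemma fZ_apply (t : M k) : fZ k t = Z ^ t.toAdd.val := rfl

/-! ### compatibility and the backward homomorphism -/

lemma q8_hom_ext {Mo : Type*} [Monoid Mo] {f g : Q8 →* Mo}
    (h1 : f (.a 1) = g (.a 1)) (h2 : f (.xa 0) = g (.xa 0)) : f = g := by
  have ha : ∀ i : ZMod (2*2), (QuaternionGroup.a i : Q8) = (.a 1 : Q8) ^ i.val := by decide
  have hxa : ∀ i : ZMod (2*2), (QuaternionGroup.xa i : Q8) = (.xa 0 : Q8) * .a i := by decide
  ext q
  rcases q with i | i
  · rw [ha i, map_pow, map_pow, h1]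
  · rw [hxa i, map_mul, map_mul, h2, ha i, map_pow, map_pow, h1]

lemma hstep : ∀ q : Q8, fQ k (σ q) = Z * fQ k q * Z⁻¹ := by
  have h := q8_hom_ext (f := (fQ k).comp σ.toMonoidHom)
    (g := (MulAut.conj (Z : P k)).toMonoidHom.comp (fQ k)) ?_ ?_
  · intro q
    exact DFunLike.congr_fun h q
  · show fQ k (σ (.a 1)) = Z * fQ k (.a 1) * Z⁻¹
    rw [show σ (.a 1 : Q8) = .xa 0 from rfl, fQ_xa, fQ_a]
    norm_num
    exact eZX.symm
  · show fQ k (σ (.xa 0)) = Z * fQ k (.xa 0) * Z⁻¹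
    rw [show σ (.xa 0 : Q8) = .xa 3 from rfl, fQ_xa, fQ_xa]
    norm_num
    rw [eZY]
    have := swap2 (k := k) 1 1
    norm_num at this
    rw [this]
    norm_num [show (3 : ZMod (2*2)).val = 3 from rfl]
lemma hpow : ∀ (n : ℕ) (q : Q8), fQ k ((σ ^ n) q) = Z ^ n * fQ k q * (Z ^ n)⁻¹ := by
  intro n
  induction n with
  | zero => intro q; simp
  | succ n ih =>
    intro q
    rw [pow_succ' σ n, MulAut.mul_apply, hstep, ih, pow_succ' (Z : P k) n]
    simp [mul_assoc]

lemma compat (g : M k) :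
    (fQ k).comp ((φ k g)).toMonoidHom = (MulAut.conj (fZ k g)).toMonoidHom.comp (fQ k) := by
  ext q
  show fQ k ((σ ^ g.toAdd.val) q) = fZ k g * fQ k q * (fZ k g)⁻¹
  exact hpow g.toAdd.val q

def F' (k : ℕ) : C k →* P k := SemidirectProduct.lift (fQ k) (fZ k) compat


/-! ### the forward homomorphism -/

def gens (k : ℕ) : Fin 3 → C k :=
  ![.inl (.a 1), .inl (.xa 0), .inr (Multiplicative.ofAdd 1)]

lemma val_one_3k (hk : 1 ≤ k) : (1 : ZMod (3 ^ k)).val = 1 := by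
  haveI : Fact (1 < 3 ^ k) := ⟨by
    calc 1 < 3 ^ 1 := by norm_num
    _ ≤ 3 ^ k := Nat.pow_le_pow_right (by norm_num) hk⟩
  exact ZMod.val_one _

lemma phi_one (hk : 1 ≤ k) : φ k (Multiplicative.ofAdd 1) = σ := by
  show σ ^ (1 : ZMod (3 ^ k)).val = σ
  rw [val_one_3k hk, pow_one]

lemma hrels (hk : 1 ≤ k) : ∀ r ∈ ppRels k, FreeGroup.lift (gens k) r = 1 := by
  intro r hr
  simp only [ppRels, Set.mem_insert_iff, Set.mem_singleton_iff] at hr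
  rcases hr with rfl | rfl | rfl | rfl | rfl
  · simp only [map_mul, map_pow, map_inv, FreeGroup.lift_apply_of, gens,
      Matrix.cons_val_zero, Matrix.cons_val_one, Matrix.head_cons,
      Matrix.cons_val_two, Matrix.tail_cons]
    rw [← map_mul, ← map_pow, ← map_pow, ← map_inv, ← map_mul]
    rw [show ((.a 1 : Q8) ^ 2 * (((.a 1 : Q8) * .xa 0) ^ 2)⁻¹) = 1 by decide]
    exact map_one _
  · simp only [map_mul, map_pow, map_inv, FreeGroup.lift_apply_of, gens,
      Matrix.cons_val_zero, Matrix.cons_val_one, Matrix.head_cons,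
      Matrix.cons_val_two, Matrix.tail_cons]
    rw [← map_mul, ← map_pow, ← map_pow, ← map_inv, ← map_mul]
    rw [show ((((.a 1 : Q8) * .xa 0) ^ 2) * (((.xa 0 : Q8) ^ 2)⁻¹) = 1) by decide]
    exact map_one _
  · simp only [map_mul, map_inv, FreeGroup.lift_apply_of, gens,
      Matrix.cons_val_zero, Matrix.cons_val_one, Matrix.head_cons,
      Matrix.cons_val_two, Matrix.tail_cons]
    rw [mul_inv_eq_one, ← map_inv, ← SemidirectProduct.inl_aut, phi_one hk]
    rw [show σ (.a 1 : Q8) = .xa 0 from rfl]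
  · simp only [map_mul, map_inv, FreeGroup.lift_apply_of, gens,
      Matrix.cons_val_zero, Matrix.cons_val_one, Matrix.head_cons,
      Matrix.cons_val_two, Matrix.tail_cons]
    rw [mul_inv_eq_one, ← map_inv, ← SemidirectProduct.inl_aut, phi_one hk, ← map_mul]
    rw [show σ (.xa 0 : Q8) = (.a 1 : Q8) * (.xa 0 : Q8) from rfl]
  · simp only [map_pow, FreeGroup.lift_apply_of, gens, Matrix.cons_val_zero,
      Matrix.cons_val_one, Matrix.head_cons, Matrix.cons_val_two, Matrix.tail_cons]
    rw [← map_pow]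
    rw [show (Multiplicative.ofAdd (1 : ZMod (3 ^ k))) ^ 3 ^ k
        = Multiplicative.ofAdd ((3 ^ k : ℕ) • (1 : ZMod (3 ^ k))) from rfl]
    rw [show ((3 ^ k : ℕ) • (1 : ZMod (3 ^ k))) = 0 by
      rw [nsmul_eq_mul, mul_one, ZMod.natCast_self]]
    exact map_one _

def F (hk : 1 ≤ k) : P k →* C k := PresentedGroup.toGroup (hrels hk)

lemma val14 : (1 : ZMod (2 * 2)).val = 1 := rfl
lemma val04 : (0 : ZMod (2 * 2)).val = 0 := rfl

lemma F'F (hk : 1 ≤ k) : (F' k).comp (F hk) = MonoidHom.id (P k) := by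
  apply PresentedGroup.ext
  intro x
  fin_cases x
  · show F' k (F hk (PresentedGroup.of 0)) = X
    rw [show F hk (PresentedGroup.of 0) = gens k 0 from PresentedGroup.toGroup.of _,
      show gens k 0 = SemidirectProduct.inl (.a 1) from rfl, F',
      SemidirectProduct.lift_inl, fQ_a, val14, pow_one]
  · show F' k (F hk (PresentedGroup.of 1)) = Y
    rw [show F hk (PresentedGroup.of 1) = gens k 1 from PresentedGroup.toGroup.of _,
      show gens k 1 = SemidirectProduct.inl (.xa 0) from rfl, F',
      SemidirectProduct.lift_inl, fQ_xa, val04, pow_zero, mul_one]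
  · show F' k (F hk (PresentedGroup.of 2)) = Z
    rw [show F hk (PresentedGroup.of 2) = gens k 2 from PresentedGroup.toGroup.of _,
      show gens k 2 = SemidirectProduct.inr (Multiplicative.ofAdd 1) from rfl, F',
      SemidirectProduct.lift_inr, fZ_apply]
    show Z ^ (1 : ZMod (3 ^ k)).val = Z
    rw [val_one_3k hk, pow_one]

lemma FF' (hk : 1 ≤ k) : (F hk).comp (F' k) = MonoidHom.id (C k) := by
  apply SemidirectProduct.hom_ext
  · apply q8_hom_ext
    · show F hk (F' k (SemidirectProduct.inl (.a 1))) = SemidirectProduct.inl (.a 1)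
      rw [F', SemidirectProduct.lift_inl, fQ_a, val14, pow_one]
      exact PresentedGroup.toGroup.of _
    · show F hk (F' k (SemidirectProduct.inl (.xa 0))) = SemidirectProduct.inl (.xa 0)
      rw [F', SemidirectProduct.lift_inl, fQ_xa, val04, pow_zero, mul_one]
      exact PresentedGroup.toGroup.of _
  · refine MonoidHom.ext fun t => ?_
    show F hk (F' k (SemidirectProduct.inr t)) = SemidirectProduct.inr t
    rw [F', SemidirectProduct.lift_inr, fZ_apply]
    rw [map_pow]
    rw [show F hk Z = gens k 2 from PresentedGroup.toGroup.of _]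
    show (SemidirectProduct.inr (Multiplicative.ofAdd (1 : ZMod (3^k)))) ^ t.toAdd.val = _
    rw [← map_pow]
    congr 1
    show Multiplicative.ofAdd ((t.toAdd.val : ℕ) • (1 : ZMod (3 ^ k))) = t
    rw [nsmul_eq_mul, mul_one]
    show ((t.toAdd.val : ℕ) : ZMod (3 ^ k)) = t.toAdd
    exact ZMod.natCast_rightInverse t.toAdd

def eIso (hk : 1 ≤ k) : P k ≃* C k := MonoidHom.toMulEquiv (F hk) (F' k) (F'F hk) (FF' hk)


/-! ### conjugacy classes of C k -/

def σ3 (u : ZMod 3) : MulAut Q8 := σ ^ u.val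

def MRel (u : ZMod 3) (q q' : Q8) : Prop :=
  ∃ p : Q8, ∃ s : ZMod 3, q' = p * σ3 s q * (σ3 u p)⁻¹

instance (u : ZMod 3) (q q' : Q8) : Decidable (MRel u q q') := by
  unfold MRel; infer_instance

def ρ (u : ZMod 3) (q : Q8) : Q8 :=
  if MRel u (.a 0) q then .a 0 else if MRel u (.a 2) q then .a 2
  else if MRel u (.a 1) q then .a 1 else .xa 0

lemma D1 : ∀ u q, MRel u q (ρ u q) := by decide
lemma D2 : ∀ u q q', MRel u q q' → ρ u q = ρ u q' := by decide
lemma D3 : ∀ u : ZMod 3,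
    (Finset.univ.filter fun q : Q8 => ρ u q = q).card = if u = 0 then 3 else 2 := by decide

lemma D3' (u : ZMod 3) : Fintype.card {q : Q8 // ρ u q = q} = if u = 0 then 3 else 2 := by
  rw [Fintype.card_subtype]; exact D3 u

def ν (t : M k) : ZMod 3 := (t.toAdd.val : ZMod 3)

lemma phi_eq (t : M k) : φ k t = σ3 (ν t) := by
  show σ ^ t.toAdd.val = σ ^ (((t.toAdd.val : ℕ) : ZMod 3)).val
  rw [ZMod.val_natCast, σpow_mod]

lemma nu_lift (hk : 1 ≤ k) (s : ZMod 3) :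
    ν (Multiplicative.ofAdd ((s.val : ZMod (3 ^ k)))) = s := by
  show (((s.val : ZMod (3 ^ k)).val : ℕ) : ZMod 3) = s
  rw [ZMod.val_natCast, Nat.mod_eq_of_lt (lt_of_lt_of_le s.val_lt (by
    calc (3 : ℕ) = 3 ^ 1 := by norm_num
    _ ≤ 3 ^ k := Nat.pow_le_pow_right (by norm_num) hk))]
  exact ZMod.natCast_rightInverse s

lemma conj_formula (p q : Q8) (s t : M k) :
    (⟨p, s⟩ : C k) * ⟨q, t⟩ * (⟨p, s⟩ : C k)⁻¹ = ⟨p * φ k s q * ((φ k t) p)⁻¹, t⟩ := by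
  have hst : s * t * s⁻¹ = t := by rw [mul_comm s t]; exact mul_inv_cancel_right t s
  ext
  · show (p * φ k s q) * (φ k (s * t) ((φ k s⁻¹) p⁻¹)) = p * φ k s q * ((φ k t) p)⁻¹
    rw [← MulAut.mul_apply, ← map_mul, hst, map_inv]
  · exact hst

lemma isConj_iff' (hk : 1 ≤ k) (q q' : Q8) (t t' : M k) :
    IsConj (⟨q, t⟩ : C k) ⟨q', t'⟩ ↔ t = t' ∧ MRel (ν t) q q' := by
  rw [isConj_iff]
  constructor
  · rintro ⟨⟨p, s⟩, hc⟩
    rw [conj_formula] at hc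
    have h1 : p * φ k s q * ((φ k t) p)⁻¹ = q' := congrArg SemidirectProduct.left hc
    have h2 : t = t' := congrArg SemidirectProduct.right hc
    refine ⟨h2, p, ν s, ?_⟩
    rw [← h1, phi_eq, phi_eq]
  · rintro ⟨rfl, p, s, rfl⟩
    refine ⟨⟨p, Multiplicative.ofAdd ((s.val : ZMod (3 ^ k)))⟩, ?_⟩
    rw [conj_formula, phi_eq, phi_eq, nu_lift hk]

lemma mrel_of_rho_eq (hk : 1 ≤ k) (u : ZMod 3) (q q' : Q8) (h : ρ u q = ρ u q') :
    MRel u q q' := by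
  set t : M k := Multiplicative.ofAdd ((u.val : ZMod (3 ^ k))) with ht
  have hu : ν t = u := nu_lift hk u
  have c1 : IsConj (⟨q, t⟩ : C k) ⟨ρ u q, t⟩ :=
    (isConj_iff' hk _ _ _ _).mpr ⟨rfl, by rw [hu]; exact D1 u q⟩
  have c2 : IsConj (⟨q', t⟩ : C k) ⟨ρ u q', t⟩ :=
    (isConj_iff' hk _ _ _ _).mpr ⟨rfl, by rw [hu]; exact D1 u q'⟩
  rw [h] at c1
  have c3 : IsConj (⟨q, t⟩ : C k) ⟨q', t⟩ := c1.trans c2.symm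
  rw [isConj_iff' hk] at c3
  rw [← hu]
  exact c3.2

abbrev T (k : ℕ) := {x : M k × Q8 // ρ (ν x.1) x.2 = x.2}

def cIdx (hk : 1 ≤ k) : ConjClasses (C k) → T k := fun c =>
  Quotient.liftOn c (fun g : C k => (⟨(g.right, ρ (ν g.right) g.left),
      (D2 (ν g.right) g.left _ (D1 (ν g.right) g.left)).symm⟩ : T k))
    (by
      intro a b hab
      obtain ⟨al, ar⟩ := a
      obtain ⟨bl, br⟩ := b
      have hab' : IsConj (⟨al, ar⟩ : C k) ⟨bl, br⟩ := hab
      rw [isConj_iff' hk] at hab'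
      obtain ⟨rfl, hrel⟩ := hab'
      exact Subtype.ext (Prod.ext rfl (D2 _ _ _ hrel)))

lemma cIdx_bij (hk : 1 ≤ k) : Function.Bijective (cIdx hk) := by
  constructor
  · intro c d
    induction c using Quotient.inductionOn with | h a => ?_
    induction d using Quotient.inductionOn with | h b => ?_
    intro h
    obtain ⟨al, ar⟩ := a
    obtain ⟨bl, br⟩ := b
    have h' := congrArg Subtype.val h
    have h1 : ar = br := congrArg Prod.fst h'
    subst h1
    have h2 : ρ (ν ar) al = ρ (ν ar) bl := congrArg Prod.snd h'
    exact Quotient.sound ((isConj_iff' hk _ _ _ _).mpr ⟨rfl, mrel_of_rho_eq hk _ _ _ h2⟩)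
  · rintro ⟨⟨t, r⟩, hr⟩
    refine ⟨Quotient.mk _ (⟨r, t⟩ : C k), ?_⟩
    exact Subtype.ext (Prod.ext rfl hr)

def TEquiv : T k ≃ Σ t : M k, {q : Q8 // ρ (ν t) q = q} :=
  ⟨fun x => ⟨x.1.1, ⟨x.1.2, x.2⟩⟩, fun y => ⟨(y.1, y.2.1), y.2.2⟩,
    fun _ => rfl, fun _ => rfl⟩

lemma pow3k (hk : 1 ≤ k) : 3 * 3 ^ (k - 1) = 3 ^ k := by
  conv_rhs => rw [show k = (k - 1) + 1 from (Nat.succ_pred_eq_of_pos hk).symm, pow_succ']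

def kerFun (hk : 1 ≤ k) : Fin (3 ^ (k - 1)) → {t : M k // ν t = 0} := fun m =>
  ⟨Multiplicative.ofAdd ((3 * m.1 : ℕ) : ZMod (3 ^ k)), by
    show (((((3 * m.1 : ℕ) : ZMod (3 ^ k))).val : ℕ) : ZMod 3) = 0
    rw [ZMod.val_natCast, Nat.mod_eq_of_lt (by
      have := m.2; have := pow3k hk; omega)]
    rw [ZMod.natCast_eq_zero_iff]
    exact ⟨m.1, rfl⟩⟩

lemma kerFun_bij (hk : 1 ≤ k) : Function.Bijective (kerFun hk) := by
  constructor
  · intro m m' h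
    have h' : ((((3 * m.1 : ℕ) : ZMod (3 ^ k))).val : ℕ)
        = ((((3 * m'.1 : ℕ) : ZMod (3 ^ k))).val : ℕ) :=
      congrArg (fun x : {t : M k // ν t = 0} => (Multiplicative.toAdd x.1).val) h
    rw [ZMod.val_natCast, ZMod.val_natCast,
      Nat.mod_eq_of_lt (by have := m.2; have := pow3k hk; omega),
      Nat.mod_eq_of_lt (by have := m'.2; have := pow3k hk; omega)] at h'
    exact Fin.ext (by omega)
  · rintro ⟨t, ht⟩
    have hdvd : 3 ∣ t.toAdd.val := by
      have h2 : (((Multiplicative.toAdd t).val : ℕ) : ZMod 3) = 0 := ht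
      rwa [ZMod.natCast_eq_zero_iff] at h2
    have hlt : t.toAdd.val < 3 ^ k := ZMod.val_lt _
    refine ⟨⟨t.toAdd.val / 3, by have := pow3k hk; omega⟩, ?_⟩
    apply Subtype.ext
    show Multiplicative.ofAdd ((3 * (t.toAdd.val / 3) : ℕ) : ZMod (3 ^ k)) = t
    rw [Nat.mul_div_cancel' hdvd]
    show ((t.toAdd.val : ℕ) : ZMod (3 ^ k)) = _
    exact ZMod.natCast_rightInverse t.toAdd

lemma card_ker (hk : 1 ≤ k) :
    (Finset.univ.filter fun t : M k => ν t = 0).card = 3 ^ (k - 1) := by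
  rw [← Fintype.card_subtype]
  rw [← Fintype.card_of_bijective (kerFun_bij hk), Fintype.card_fin]

lemma card_conj_C (hk : 1 ≤ k) : Nat.card (ConjClasses (C k)) = 7 * 3 ^ (k - 1) := by
  have h1 : Nat.card (ConjClasses (C k)) = Nat.card (T k) :=
    Nat.card_eq_of_bijective _ (cIdx_bij hk)
  rw [h1, Nat.card_eq_fintype_card, Fintype.card_congr (TEquiv (k := k)), Fintype.card_sigma]
  have h2 : ∀ t : M k, Fintype.card {q : Q8 // ρ (ν t) q = q}
      = (if ν t = 0 then 1 else 0) + 2 := by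
    intro t
    rw [D3']
    split <;> rfl
  rw [Finset.sum_congr rfl (fun t _ => h2 t), Finset.sum_add_distrib]
  rw [Finset.sum_boole, Nat.cast_id]
  rw [card_ker hk, Finset.sum_const, Finset.card_univ, smul_eq_mul]
  have h3 : Fintype.card (M k) = 3 ^ k := by
    rw [Fintype.card_multiplicative, ZMod.card]
  rw [h3]
  have := pow3k hk
  omega

def conjCongr {G H : Type*} [Group G] [Group H] (e : G ≃* H) :
    ConjClasses G ≃ ConjClasses H :=
  Quotient.congr e.toEquiv (fun a b => by
    show IsConj a b ↔ IsConj (e a) (e b)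
    constructor
    · intro h
      exact e.toMonoidHom.map_isConj h
    · intro h
      have := e.symm.toMonoidHom.map_isConj h
      simpa using this)


/-! ### one-dimensional representations -/

lemma homrels (ω : ℂˣ) (hω : ω ^ 3 ^ k = 1) :
    ∀ r ∈ ppRels k, FreeGroup.lift (fun i : Fin 3 => if i = 2 then ω else 1) r = 1 := by
  intro r hr
  simp only [ppRels, Set.mem_insert_iff, Set.mem_singleton_iff] at hr
  rcases hr with rfl | rfl | rfl | rfl | rfl <;>
    simp [map_mul, map_pow, map_inv, FreeGroup.lift_apply_of, hω]

def homEquiv (hk : 1 ≤ k) : (P k →* ℂˣ) ≃ {ω : ℂˣ // ω ^ 3 ^ k = 1} where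
  toFun ψ := ⟨ψ Z, by rw [← map_pow, eZ, map_one]⟩
  invFun ω := PresentedGroup.toGroup (homrels ω.1 ω.2)
  left_inv ψ := by
    have hXY : ψ X = ψ Y := by
      have h := congrArg ψ (eZX (k := k))
      rw [map_mul, map_mul, map_inv, mul_comm (ψ Z) (ψ X), mul_inv_cancel_right] at h
      exact h
    have hX1 : ψ X = 1 := by
      have h := congrArg ψ (eZY (k := k))
      rw [map_mul, map_mul, map_inv, mul_comm (ψ Z) (ψ Y), mul_inv_cancel_right, map_mul] at h
      exact right_eq_mul.mp h
    have hY1 : ψ Y = 1 := hXY ▸ hX1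
    apply PresentedGroup.ext
    intro x
    fin_cases x
    · simp only [PresentedGroup.toGroup.of]
      rw [if_neg (by decide)]
      exact hX1.symm
    · simp only [PresentedGroup.toGroup.of]
      rw [if_neg (by decide)]
      exact hY1.symm
    · simp only [PresentedGroup.toGroup.of]
      rw [if_pos (by decide)]
      rfl
  right_inv ω := by
    apply Subtype.ext
    show PresentedGroup.toGroup (homrels ω.1 ω.2) (PresentedGroup.of 2) = ω.1
    rw [PresentedGroup.toGroup.of, if_pos rfl]

lemma card_homs (hk : 1 ≤ k) : Nat.card (P k →* ℂˣ) = 3 ^ k := by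
  rw [Nat.card_congr (homEquiv hk)]
  rw [Nat.card_congr (Equiv.subtypeEquivRight
    (fun ω : ℂˣ => (mem_rootsOfUnity (3 ^ k) ω).symm))]
  exact Complex.card_rootsOfUnity (3 ^ k)

end Stmt13Aux

/-- The group P'_{8·3^k} has exactly 7·3^{k−1} irreducible complex representations
(the number of irreducibles equals the number of conjugacy classes): 3^k
one-dimensional (one-dimensional representations being exactly the homomorphisms to ℂˣ),
3^k two-dimensional and 3^{k−1} three-dimensional, and the sum of squares of the
dimensions equals the order 8·3^k. -/
theorem stmt13 (k : ℕ) (hk : 2 ≤ k) :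
    Nat.card (ConjClasses (PresentedGroup (ppRels k))) = 7 * 3 ^ (k - 1) ∧
    Nat.card (PresentedGroup (ppRels k) →* ℂˣ) = 3 ^ k ∧
    3 ^ k + 3 ^ k + 3 ^ (k - 1) = 7 * 3 ^ (k - 1) ∧
    3 ^ k + 4 * 3 ^ k + 9 * 3 ^ (k - 1) = 8 * 3 ^ k := by
  have hk1 : 1 ≤ k := le_trans (by norm_num) hk
  have h3k := Stmt13Aux.pow3k hk1
  refine ⟨?_, Stmt13Aux.card_homs hk1, by omega, by omega⟩
  rw [Nat.card_congr (Stmt13Aux.conjCongr (Stmt13Aux.eIso hk1))]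
  exact Stmt13Aux.card_conj_C hk1
end

section
/- Let q ≥ 2 and 1 ≤ t ≤ q−1, and let ζ = e^{2πi/(2q)}. Then (1/4q)·[ −Σ_{j=1}^{2q−1} (2 − ζ^{tj} − ζ^{−tj})/(2 − ζ^j − ζ^{−j}) − 2q ] = (t² − 2qt − 2q)/(4q). -/
noncomputable section

open Finset

private lemma ratio_lemma (t : ℕ) (z : ℂ) (hz0 : z ≠ 0) (hz1 : z ≠ 1) :
    (2 - z ^ t - (z ^ t)⁻¹) / (2 - z - z⁻¹) =
      ∑ k ∈ range t, ∑ l ∈ range t, z ^ k * (z ^ l)⁻¹ := by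
  have hz1' : z - 1 ≠ 0 := sub_ne_zero.mpr hz1
  have hzi1 : z⁻¹ - 1 ≠ 0 := by
    rw [sub_ne_zero]
    intro h
    apply hz1
    field_simp at h
    exact h.symm
  have hden : 2 - z - z⁻¹ = (z - 1) * (z⁻¹ - 1) := by
    field_simp
    ring
  have hdnz : 2 - z - z⁻¹ ≠ 0 := by rw [hden]; exact mul_ne_zero hz1' hzi1
  rw [div_eq_iff hdnz]
  simp_rw [← inv_pow]
  rw [← Finset.sum_mul_sum]
  have hS : (∑ k ∈ range t, z ^ k) * (z - 1) = z ^ t - 1 := geom_sum_mul z t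
  have hS' : (∑ l ∈ range t, (z⁻¹) ^ l) * (z⁻¹ - 1) = (z⁻¹) ^ t - 1 := geom_sum_mul z⁻¹ t
  have key : (∑ k ∈ range t, z ^ k) * (∑ l ∈ range t, (z⁻¹) ^ l) * (2 - z - z⁻¹)
      = ((∑ k ∈ range t, z ^ k) * (z - 1)) * ((∑ l ∈ range t, (z⁻¹) ^ l) * (z⁻¹ - 1)) := by
    rw [hden]; ring
  rw [key, hS, hS', inv_pow]
  have hzt : z ^ t ≠ 0 := pow_ne_zero _ hz0
  field_simp
  ring

private lemma bdInnerSum (n : ℕ) (ζ : ℂ) (hζ : IsPrimitiveRoot ζ n) (hn : 0 < n) (k l : ℕ)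
    (hk : k < n) (hl : l < n) :
    ∑ j ∈ Finset.Ico 1 n, (ζ ^ j) ^ k * ((ζ ^ j) ^ l)⁻¹ =
      if k = l then (n : ℂ) - 1 else -1 := by
  have hζ0 : ζ ≠ 0 := hζ.ne_zero hn.ne'
  set w : ℂ := ζ ^ k * (ζ ^ l)⁻¹ with hw
  have hterm : ∀ j, (ζ ^ j) ^ k * ((ζ ^ j) ^ l)⁻¹ = w ^ j := by
    intro j
    have h1 : (ζ ^ j) ^ k = (ζ ^ k) ^ j := by rw [← pow_mul, mul_comm, pow_mul]
    have h2 : (ζ ^ j) ^ l = (ζ ^ l) ^ j := by rw [← pow_mul, mul_comm, pow_mul]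
    rw [h1, h2, hw, mul_pow, inv_pow]
  simp_rw [hterm]
  have hsplit : ∑ j ∈ range n, w ^ j = w ^ 0 + ∑ j ∈ Finset.Ico 1 n, w ^ j := by
    rw [Finset.range_eq_Ico, ← Finset.sum_Ico_consecutive _ (Nat.zero_le 1) hn]
    congr 1
    simp
  rw [pow_zero] at hsplit
  by_cases hkl : k = l
  · subst hkl
    have hw1 : w = 1 := mul_inv_cancel₀ (pow_ne_zero _ hζ0)
    simp only [hw1, one_pow, Finset.sum_const, Nat.card_Ico, nsmul_eq_mul, mul_one, if_pos rfl]
    push_cast [Nat.cast_sub hn]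
    ring
  · have hw1 : w ≠ 1 := by
      intro h
      apply hkl
      have : ζ ^ k = ζ ^ l := by
        have hl0 : (ζ : ℂ) ^ l ≠ 0 := pow_ne_zero _ hζ0
        field_simp [hw] at h
        exact (mul_inv_eq_one₀ hl0).mp h
      exact hζ.pow_inj hk hl this
    have hwn : w ^ n = 1 := by
      rw [hw, mul_pow, inv_pow, ← pow_mul, ← pow_mul, mul_comm k n, mul_comm l n,
        pow_mul, pow_mul, hζ.pow_eq_one, one_pow, one_pow, inv_one, mul_one]
    have hgeom : ∑ j ∈ range n, w ^ j = 0 := by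
      rw [geom_sum_eq hw1, hwn, sub_self, zero_div]
    rw [if_neg hkl]
    linear_combination hgeom - hsplit

theorem stmt15 (q t : ℕ) (hq : 2 ≤ q) (ht1 : 1 ≤ t) (ht2 : t ≤ q - 1) :
    (1 / (4 * (q : ℂ))) *
        (-(∑ j ∈ Finset.Ico 1 (2 * q),
            (2 - zeta (2 * q) ^ (t * j) - (zeta (2 * q) ^ (t * j))⁻¹) /
              (2 - zeta (2 * q) ^ j - (zeta (2 * q) ^ j)⁻¹)) - 2 * (q : ℂ)) =
      ((t : ℂ) ^ 2 - 2 * q * t - 2 * q) / (4 * q) := by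
  set n := 2 * q with hn
  have hn0 : 0 < n := by omega
  have hζ : IsPrimitiveRoot (zeta n) n := Complex.isPrimitiveRoot_exp n hn0.ne'
  have hζ0 : zeta n ≠ 0 := Complex.exp_ne_zero _
  have htn : t < n := by omega
  have hsum : (∑ j ∈ Finset.Ico 1 n,
      (2 - zeta n ^ (t * j) - (zeta n ^ (t * j))⁻¹) /
        (2 - zeta n ^ j - (zeta n ^ j)⁻¹)) = t * ((n : ℂ) - t) := by
    have step1 : (∑ j ∈ Finset.Ico 1 n,
        (2 - zeta n ^ (t * j) - (zeta n ^ (t * j))⁻¹) /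
          (2 - zeta n ^ j - (zeta n ^ j)⁻¹)) =
        ∑ j ∈ Finset.Ico 1 n, ∑ k ∈ range t, ∑ l ∈ range t,
          (zeta n ^ j) ^ k * ((zeta n ^ j) ^ l)⁻¹ := by
      apply Finset.sum_congr rfl
      intro j hj
      rw [Finset.mem_Ico] at hj
      have hz1 : zeta n ^ j ≠ 1 := hζ.pow_ne_one_of_pos_of_lt (by omega) hj.2
      rw [pow_mul' (zeta n) t j]
      exact ratio_lemma t (zeta n ^ j) (pow_ne_zero _ hζ0) hz1
    rw [step1, Finset.sum_comm]
    have step2 : ∀ k ∈ range t, (∑ j ∈ Finset.Ico 1 n, ∑ l ∈ range t,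
        (zeta n ^ j) ^ k * ((zeta n ^ j) ^ l)⁻¹) = (n : ℂ) - t := by
      intro k hk
      rw [Finset.mem_range] at hk
      rw [Finset.sum_comm]
      have step3 : ∀ l ∈ range t, (∑ j ∈ Finset.Ico 1 n,
          (zeta n ^ j) ^ k * ((zeta n ^ j) ^ l)⁻¹) =
          (if k = l then (n : ℂ) else 0) - 1 := by
        intro l hl
        rw [Finset.mem_range] at hl
        rw [bdInnerSum n (zeta n) hζ hn0 k l (by omega) (by omega)]
        split <;> ring
      rw [Finset.sum_congr rfl step3, Finset.sum_sub_distrib, Finset.sum_ite_eq,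
        if_pos (Finset.mem_range.mpr hk), Finset.sum_const, Finset.card_range]
      simp
    rw [Finset.sum_congr rfl step2, Finset.sum_const, Finset.card_range]
    simp [mul_comm]
  rw [hsum]
  have hq0 : (q : ℂ) ≠ 0 := Nat.cast_ne_zero.mpr (by omega)
  have hnc : (n : ℂ) = 2 * q := by push_cast [hn]; ring
  rw [hnc]
  field_simp
  ring
end
end
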